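/- Let T : D(T) ⊆ H → H be a closed, densely defined self-adjoint Fredholm operator with compact resolvent (equivalently, (T+i)⁻¹ compact). Then the unitary U with Cayley graph equal to the switched graph of T satisfies U − 1 compact; i.e., the switched graph of T lies in the space of lagrangians commensurable with the horizontal space H⁺. More generally, for a two-sided ideal 𝓘 containing the finite-rank operators, the switched graph of T satisfies U − 1 ∈ 𝓘 if and only if the resolvent (T+i)⁻¹ ∈ 𝓘. -/

import Mathlib

noncomputable section

variable (H : Type) [NormedAddCommGroup H] [InnerProductSpace ℂ H] [CompleteSpace H]

/-- `Ĥ = H ⊕ H` with the Hilbert (l²) structure. -/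
abbrev Hh := WithLp 2 (H × H)

/-- The Cayley graph map: `𝒞(U) = Ran {v ↦ ((1+U)v, -i(1-U)v)} ⊆ H ⊕ H`. -/
def cayleyGraph (U : H →L[ℂ] H) : Submodule ℂ (Hh H) :=
  LinearMap.range
    (((WithLp.prodContinuousLinearEquiv 2 ℂ H H).symm.toContinuousLinearMap ∘L
      ((1 + U).prod ((-Complex.I) • (1 - U)))) : H →L[ℂ] Hh H).toLinearMap

/-- The switched graph `{(T v, v) : v ∈ D(T)}` of an unbounded operator `T`. -/
def switchedGraph (T : H →ₗ.[ℂ] H) : Submodule ℂ (Hh H) :=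
  LinearMap.range
    (((WithLp.prodContinuousLinearEquiv 2 ℂ H H).symm.toContinuousLinearMap.toLinearMap).comp
      (T.toFun.prod T.domain.subtype))

set_option linter.unusedSectionVars false in
theorem key_identity (T : H →ₗ.[ℂ] H)
    (R : H →L[ℂ] H)
    (hR₁ : ∀ v : T.domain, R (T v + Complex.I • (v : H)) = (v : H))
    (U : H →L[ℂ] H)
    (hcg : cayleyGraph H U = switchedGraph H T) :
    (U - 1 : H →L[ℂ] H) = (-(2*Complex.I)) • R := by
  ext v
  have hx : ((WithLp.prodContinuousLinearEquiv 2 ℂ H H).symm.toContinuousLinearMap ∘L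
      ((1 + U).prod ((-Complex.I) • (1 - U)))) v ∈ cayleyGraph H U :=
    LinearMap.mem_range_self _ v
  rw [hcg] at hx
  obtain ⟨w, hw⟩ := hx
  have hw' := congrArg (WithLp.prodContinuousLinearEquiv 2 ℂ H H) hw
  simp only [LinearMap.coe_comp, Function.comp_apply, ContinuousLinearEquiv.coe_coe,
    ContinuousLinearMap.coe_comp', ContinuousLinearMap.coe_coe,
    ContinuousLinearEquiv.apply_symm_apply, LinearMap.prod_apply, Function.prod,
    ContinuousLinearMap.prod_apply, Submodule.coe_subtype] at hw'
  obtain ⟨h1, h2⟩ := Prod.ext_iff.mp hw'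
  dsimp only at h1 h2
  have key := hR₁ w
  rw [show (T w : H) = T.toFun w from rfl, h1, h2] at key
  simp only [ContinuousLinearMap.smul_apply, ContinuousLinearMap.add_apply,
    ContinuousLinearMap.sub_apply, ContinuousLinearMap.one_apply, smul_smul] at key
  have harg : v + U v + (Complex.I * -Complex.I) • (v - U v) = (2:ℂ) • v := by
    simp [Complex.I_mul_I]
    module
  rw [harg, map_smul] at key
  have goal2 : (U - 1) v = U v - v := by simp
  rw [goal2, ContinuousLinearMap.smul_apply,
    show (-(2*Complex.I) : ℂ) • R v = (-Complex.I) • ((2:ℂ) • R v) by rw [smul_smul]; ring_nf,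
    key, smul_smul, neg_mul_neg, Complex.I_mul_I, neg_one_smul, neg_sub]

/-- let `T` be a closed, densely defined self-adjoint operator, `R` its
resolvent at `-i` (the two-sided inverse of `v ↦ Tv + i v`), and `U` the unitary whose
Cayley graph is the switched graph of `T`.  If `R` is compact, then `U - 1` is compact
(i.e. the switched graph is commensurable with `H⁺`); more generally, for a two-sided
ideal `𝓘` contained in the compact operators and containing the finite-rank operators,
`U - 1 ∈ 𝓘` if and only if `R ∈ 𝓘`. -/
theorem switched_graph_commensurable_iff_resolvent_in_ideal (T : H →ₗ.[ℂ] H)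
    (hd : Dense (T.domain : Set H)) (hsa : IsSelfAdjoint T) (hcl : T.IsClosed)
    (R : H →L[ℂ] H)
    (hR₁ : ∀ v : T.domain, R (T v + Complex.I • (v : H)) = (v : H))
    (hR₂ : ∀ y : H, ∃ v : T.domain, T v + Complex.I • (v : H) = y)
    (U : H →L[ℂ] H) (hU : U ∈ unitary (H →L[ℂ] H))
    (hcg : cayleyGraph H U = switchedGraph H T)
    (𝓘 : TwoSidedIdeal (H →L[ℂ] H))
    (h𝓘K : ∀ f ∈ 𝓘, IsCompactOperator f)
    (h𝓘F : ∀ f : H →L[ℂ] H, FiniteDimensional ℂ ↥(LinearMap.range (f : H →ₗ[ℂ] H)) → f ∈ 𝓘) :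
    (IsCompactOperator R → IsCompactOperator (U - 1 : H →L[ℂ] H)) ∧
    ((U - 1 : H →L[ℂ] H) ∈ 𝓘 ↔ R ∈ 𝓘) := by
  have hUR : (U - 1 : H →L[ℂ] H) = (-(2*Complex.I)) • R := key_identity H T R hR₁ U hcg
  have hsmul : ∀ (c : ℂ) (f : H →L[ℂ] H), f ∈ 𝓘 → c • f ∈ 𝓘 := fun c f hf => by
    have h : c • f = (c • (1 : H →L[ℂ] H)) * f := by simp [smul_mul_assoc]
    rw [h]; exact 𝓘.mul_mem_left _ _ hf
  constructor
  · intro hc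
    rw [hUR]
    simpa using hc.smul (-(2*Complex.I))
  · constructor
    · intro h
      have hR : R = (-(2*Complex.I))⁻¹ • (U - 1 : H →L[ℂ] H) := by
        rw [hUR, smul_smul, inv_mul_cancel₀ (by simp [Complex.I_ne_zero]), one_smul]
      rw [hR]; exact hsmul _ _ h
    · intro h
      rw [hUR]; exact hsmul _ _ h
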